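/- Let α : ℕ → ℂ be a finitely supported sequence and let (e_j)_{j∈ℕ} be the standard orthonormal basis of ℓ²(ℕ, ℂ). Let T be the bounded operator T = ∑_j α_j ( ⟨·, e_j⟩ e_{j+1} - ⟨·, e_{j+1}⟩ e_j ) (a finite sum of rank-two operators). Then sup_j |α_j| ≤ ‖T‖ ≤ 2 · sup_j |α_j|, where ‖T‖ is the operator norm. -/

import Mathlib

open scoped ComplexOrder

noncomputable section

/-- The Hilbert space `ℓ²(ℕ, ℂ)`. -/
abbrev Hl2 : Type := lp (fun _ : ℕ => ℂ) 2

/-- The standard orthonormal basis vectors of `ℓ²(ℕ, ℂ)`. -/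
def e (j : ℕ) : Hl2 := lp.single 2 j 1

/-- The rank-two operator `v ↦ ⟨v, e_j⟩ e_{j+1} - ⟨v, e_{j+1}⟩ e_j`. -/
def rk2 (j : ℕ) : Hl2 →L[ℂ] Hl2 :=
  (innerSL ℂ (e j)).smulRight (e (j + 1)) - (innerSL ℂ (e (j + 1))).smulRight (e j)

lemma e_orthonormal : Orthonormal ℂ e := by
  rw [orthonormal_iff_ite]
  intro i j
  simp [e, lp.inner_single_left, lp.single_apply, Pi.single_apply, eq_comm]

lemma shift_norm_le (s : Finset ℕ) (c : ℕ → ℂ) (f g : ℕ → ℕ)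
    (hf : Function.Injective f) (hg : Function.Injective g) (M : ℝ) (hM : 0 ≤ M)
    (hc : ∀ j ∈ s, ‖c j‖ ≤ M) :
    ‖∑ j ∈ s, c j • (innerSL ℂ (e (f j))).smulRight (e (g j))‖ ≤ M := by
  apply ContinuousLinearMap.opNorm_le_bound _ hM
  intro v
  have happ : (∑ j ∈ s, c j • (innerSL ℂ (e (f j))).smulRight (e (g j))) v
      = ∑ j ∈ s, (c j * inner ℂ (e (f j)) v) • e (g j) := by
    rw [ContinuousLinearMap.sum_apply]
    refine Finset.sum_congr rfl fun j _ => ?_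
    simp [mul_smul]
  rw [happ]
  have honf : Orthonormal ℂ (fun j => e (f j)) := e_orthonormal.comp f hf
  have hong : Orthonormal ℂ (fun j => e (g j)) := e_orthonormal.comp g hg
  have hsq : ‖∑ j ∈ s, (c j * inner ℂ (e (f j)) v) • e (g j)‖ ^ 2
      = ∑ j ∈ s, ‖c j * inner ℂ (e (f j)) v‖ ^ 2 := by
    rw [← inner_self_eq_norm_sq (𝕜 := ℂ), hong.inner_sum]
    rw [map_sum]
    refine Finset.sum_congr rfl fun j _ => ?_
    rw [RCLike.conj_mul]
    norm_cast
  have hbessel : ∑ j ∈ s, ‖(inner ℂ (e (f j)) v : ℂ)‖ ^ 2 ≤ ‖v‖ ^ 2 :=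
    honf.sum_inner_products_le v
  have h2 : ‖∑ j ∈ s, (c j * inner ℂ (e (f j)) v) • e (g j)‖ ^ 2 ≤ (M * ‖v‖) ^ 2 := by
    rw [hsq]
    calc ∑ j ∈ s, ‖c j * inner ℂ (e (f j)) v‖ ^ 2
        ≤ ∑ j ∈ s, M ^ 2 * ‖(inner ℂ (e (f j)) v : ℂ)‖ ^ 2 := by
          refine Finset.sum_le_sum fun j hj => ?_
          rw [norm_mul, mul_pow]
          have := hc j hj
          have h0 : (0:ℝ) ≤ ‖(inner ℂ (e (f j)) v : ℂ)‖ ^ 2 := by positivity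
          have : ‖c j‖ ^ 2 ≤ M ^ 2 := by
            have := hc j hj
            nlinarith [norm_nonneg (c j)]
          nlinarith
      _ = M ^ 2 * ∑ j ∈ s, ‖(inner ℂ (e (f j)) v : ℂ)‖ ^ 2 := by rw [Finset.mul_sum]
      _ ≤ M ^ 2 * ‖v‖ ^ 2 := by nlinarith
      _ = (M * ‖v‖) ^ 2 := by ring
  nlinarith [norm_nonneg (∑ j ∈ s, (c j * inner ℂ (e (f j)) v) • e (g j)),
    mul_nonneg hM (norm_nonneg v)]

lemma key_inner (α : ℕ →₀ ℂ) (k : ℕ) :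
    (inner ℂ (e (k + 1)) ((∑ j ∈ α.support, α j • rk2 j) (e k)) : ℂ) = α k := by
  have hij : ∀ i j : ℕ, (inner ℂ (e i) (e j) : ℂ) = if i = j then 1 else 0 :=
    orthonormal_iff_ite.mp e_orthonormal
  rw [ContinuousLinearMap.sum_apply, inner_sum]
  have hterm : ∀ j ∈ α.support,
      (inner ℂ (e (k + 1)) ((α j • rk2 j) (e k)) : ℂ) = if j = k then α k else 0 := by
    intro j _
    simp only [rk2, ContinuousLinearMap.smul_apply, ContinuousLinearMap.sub_apply,
      ContinuousLinearMap.smulRight_apply, innerSL_apply_apply, inner_smul_right,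
      inner_sub_right, hij, smul_eq_mul]
    by_cases h : j = k
    · subst h; simp
    · have h1 : k + 1 ≠ j + 1 := by omega
      by_cases h2 : j + 1 = k
      · have h3 : k + 1 ≠ j := by omega
        simp [h, h1, h2, h3]
      · have h5 : k ≠ j + 1 := fun hh => h2 hh.symm
        simp [h, h1, h2, h5]
  rw [Finset.sum_congr rfl hterm, Finset.sum_ite_eq' α.support k (fun _ => α k)]
  by_cases hk : k ∈ α.support
  · simp [hk]
  · simp [hk, Finsupp.notMem_support_iff.mp hk]

/-- for a finitely supported `α : ℕ → ℂ`, the operator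
`T = ∑_j α_j (⟨·,e_j⟩ e_{j+1} - ⟨·,e_{j+1}⟩ e_j)` satisfies
`sup_j |α_j| ≤ ‖T‖ ≤ 2 sup_j |α_j|`. -/
theorem stmt8 (α : ℕ →₀ ℂ) :
    (⨆ j : ℕ, ‖α j‖) ≤ ‖∑ j ∈ α.support, α j • rk2 j‖
    ∧ ‖∑ j ∈ α.support, α j • rk2 j‖ ≤ 2 * ⨆ j : ℕ, ‖α j‖ := by
  set T := ∑ j ∈ α.support, α j • rk2 j with hT
  have hbdd : BddAbove (Set.range fun j => ‖α j‖) := by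
    apply Set.Finite.bddAbove
    apply Set.Finite.subset (Set.Finite.insert 0 (α.support.finite_toSet.image
      (fun j => ‖α j‖)))
    rintro x ⟨j, rfl⟩
    by_cases hj : j ∈ α.support
    · exact Set.mem_insert_of_mem _ ⟨j, hj, rfl⟩
    · simp [Finsupp.notMem_support_iff.mp hj]
  have hnorm1 : ∀ i, ‖e i‖ = 1 := e_orthonormal.1
  have hlow : ∀ k, ‖α k‖ ≤ ‖T‖ := by
    intro k
    have h1 : ‖α k‖ = ‖(inner ℂ (e (k + 1)) (T (e k)) : ℂ)‖ := by
      rw [key_inner]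
    rw [h1]
    calc ‖(inner ℂ (e (k + 1)) (T (e k)) : ℂ)‖ ≤ ‖e (k + 1)‖ * ‖T (e k)‖ :=
          norm_inner_le_norm _ _
      _ = ‖T (e k)‖ := by rw [hnorm1, one_mul]
      _ ≤ ‖T‖ * ‖e k‖ := T.le_opNorm _
      _ = ‖T‖ := by rw [hnorm1, mul_one]
  constructor
  · exact ciSup_le hlow
  · set M := ⨆ j : ℕ, ‖α j‖ with hM
    have hMle : ∀ j, ‖α j‖ ≤ M := fun j => le_ciSup hbdd j
    have hM0 : 0 ≤ M := le_trans (norm_nonneg (α 0)) (hMle 0)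
    have hsplit : T = (∑ j ∈ α.support, α j • (innerSL ℂ (e j)).smulRight (e (j + 1)))
        - (∑ j ∈ α.support, α j • (innerSL ℂ (e (j + 1))).smulRight (e j)) := by
      rw [hT, ← Finset.sum_sub_distrib]
      refine Finset.sum_congr rfl fun j _ => ?_
      rw [rk2, smul_sub]
    rw [hsplit]
    have hA : ‖∑ j ∈ α.support, α j • (innerSL ℂ (e j)).smulRight (e (j + 1))‖ ≤ M :=
      shift_norm_le α.support α id Nat.succ Function.injective_id Nat.succ_injective
        M hM0 (fun j _ => hMle j)
    have hB : ‖∑ j ∈ α.support, α j • (innerSL ℂ (e (j + 1))).smulRight (e j)‖ ≤ M :=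
      shift_norm_le α.support α Nat.succ id Nat.succ_injective Function.injective_id
        M hM0 (fun j _ => hMle j)
    calc ‖_ - _‖ ≤ _ + _ := norm_sub_le _ _
      _ ≤ M + M := add_le_add hA hB
      _ = 2 * M := by ring

end
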